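/- Let N ≥ 1 and m ≥ 1 be integers and let q ∈ ℂ satisfy q^m = 1. Then in F_q(N) the elements z_i^m and (z_i^*)^m are central for every i = 0,…,N−1, and z_{N−1}^a (z_{N−1}^*)^{m−a} is central for every a = 0,1,…,m. -/
import Mathlib


open FreeAlgebra

/-- Generators of `F_q(N)`: `Sum.inl i` is `z_i` and `Sum.inr i` is `z_i^*`. -/
abbrev FqGen (N : ℕ) : Type := Fin N ⊕ Fin N

/-- The defining relations of `F_q(N)`. -/
inductive FqRel (N : ℕ) (q : ℂ) : FreeAlgebra ℂ (FqGen N) → FreeAlgebra ℂ (FqGen N) → Prop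
  | zz (i j : Fin N) (h : i < j) :
      FqRel N q (ι ℂ (Sum.inl i) * ι ℂ (Sum.inl j))
        (q⁻¹ • (ι ℂ (Sum.inl j) * ι ℂ (Sum.inl i)))
  | ss (i j : Fin N) (h : i < j) :
      FqRel N q (ι ℂ (Sum.inr i) * ι ℂ (Sum.inr j))
        (q • (ι ℂ (Sum.inr j) * ι ℂ (Sum.inr i)))
  | zs (i j : Fin N) (h : i ≠ j) :
      FqRel N q (ι ℂ (Sum.inl i) * ι ℂ (Sum.inr j))
        (q⁻¹ • (ι ℂ (Sum.inr j) * ι ℂ (Sum.inl i)))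
  | heis (i : Fin N) :
      FqRel N q (ι ℂ (Sum.inl i) * ι ℂ (Sum.inr i) - ι ℂ (Sum.inr i) * ι ℂ (Sum.inl i))
        ((q ^ 2 - 1) • ∑ k ∈ Finset.univ.filter (fun k : Fin N => i < k),
            ι ℂ (Sum.inl k) * ι ℂ (Sum.inr k))

/-- The algebra `F_q(N)`: the quotient of the free algebra by (the two-sided ideal
generated by) the defining relations. -/
abbrev Fq (N : ℕ) (q : ℂ) : Type := RingQuot (FqRel N q)

/-- The generator `z_i` of `F_q(N)`. -/
noncomputable def zGen (N : ℕ) (q : ℂ) (i : Fin N) : Fq N q :=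
  RingQuot.mkAlgHom ℂ (FqRel N q) (ι ℂ (Sum.inl i))

/-- The generator `z_i^*` of `F_q(N)`. -/
noncomputable def zsGen (N : ℕ) (q : ℂ) (i : Fin N) : Fq N q :=
  RingQuot.mkAlgHom ℂ (FqRel N q) (ι ℂ (Sum.inr i))

/-! ### Auxiliary machinery -/

namespace FqAux

variable (N : ℕ) (q : ℂ)

/-- The sum appearing on the RHS of the Heisenberg-type relation. -/
noncomputable def Sq (i : Fin N) : Fq N q :=
  ∑ k ∈ Finset.univ.filter (fun k : Fin N => i < k), zGen N q k * zsGen N q k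

lemma rel_zz {i j : Fin N} (h : i < j) :
    zGen N q i * zGen N q j = q⁻¹ • (zGen N q j * zGen N q i) := by
  have h' := RingQuot.mkAlgHom_rel ℂ (FqRel.zz (N := N) (q := q) i j h)
  simpa [zGen, map_mul, map_smul] using h'

lemma rel_ss {i j : Fin N} (h : i < j) :
    zsGen N q i * zsGen N q j = q • (zsGen N q j * zsGen N q i) := by
  have h' := RingQuot.mkAlgHom_rel ℂ (FqRel.ss (N := N) (q := q) i j h)
  simpa [zsGen, map_mul, map_smul] using h'

lemma rel_zs {i j : Fin N} (h : i ≠ j) :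
    zGen N q i * zsGen N q j = q⁻¹ • (zsGen N q j * zGen N q i) := by
  have h' := RingQuot.mkAlgHom_rel ℂ (FqRel.zs (N := N) (q := q) i j h)
  simpa [zGen, zsGen, map_mul, map_smul] using h'

lemma rel_heis (i : Fin N) :
    zGen N q i * zsGen N q i = zsGen N q i * zGen N q i + (q ^ 2 - 1) • Sq N q i := by
  have h' := RingQuot.mkAlgHom_rel ℂ (FqRel.heis (N := N) (q := q) i)
  rw [← sub_eq_iff_eq_add']
  simpa [Sq, zGen, zsGen, map_sub, map_mul, map_smul, map_sum] using h'

/-- Move an invertible scalar to the other side. -/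
lemma swap_smul {A : Type*} [AddCommMonoid A] [Module ℂ A] {x y : A} {c : ℂ}
    (hc : c ≠ 0) (h : x = c • y) : y = c⁻¹ • x := by
  rw [h, smul_smul, inv_mul_cancel₀ hc, one_smul]

/-- If `a b = c • (b a)` then `a bⁿ = cⁿ • (bⁿ a)`. -/
lemma comm_pow {A : Type*} [Ring A] [Algebra ℂ A] {a b : A} {c : ℂ}
    (h : a * b = c • (b * a)) (n : ℕ) : a * b ^ n = c ^ n • (b ^ n * a) := by
  induction n with
  | zero => simp
  | succ n ih =>
    calc a * b ^ (n + 1) = (a * b ^ n) * b := by rw [pow_succ, mul_assoc]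
      _ = c ^ n • (b ^ n * (a * b)) := by rw [ih, smul_mul_assoc, mul_assoc]
      _ = c ^ n • (b ^ n * (c • (b * a))) := by rw [h]
      _ = c ^ (n + 1) • (b ^ (n + 1) * a) := by
          rw [mul_smul_comm, smul_smul, ← mul_assoc, ← pow_succ, ← pow_succ]

lemma comm_mul_pow {A : Type*} [Ring A] [Algebra ℂ A] {y u v : A} {c : ℂ}
    (h1 : y * u = c • (u * y)) (h2 : y * v = c • (v * y)) (a b : ℕ) :
    y * (u ^ a * v ^ b) = c ^ (a + b) • (u ^ a * v ^ b * y) := by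
  calc y * (u ^ a * v ^ b) = (y * u ^ a) * v ^ b := by rw [mul_assoc]
    _ = c ^ a • (u ^ a * (y * v ^ b)) := by rw [comm_pow h1, smul_mul_assoc, mul_assoc]
    _ = c ^ a • (u ^ a * (c ^ b • (v ^ b * y))) := by rw [comm_pow h2]
    _ = c ^ (a + b) • (u ^ a * v ^ b * y) := by
        rw [mul_smul_comm, smul_smul, ← pow_add, mul_assoc]

/-- To be central it suffices to commute with the generators. -/
lemma mem_center_of (x : Fq N q)
    (hz : ∀ j : Fin N, zGen N q j * x = x * zGen N q j)
    (hs : ∀ j : Fin N, zsGen N q j * x = x * zsGen N q j) :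
    x ∈ Subring.center (Fq N q) := by
  rw [Subring.mem_center_iff]
  intro y
  obtain ⟨f, rfl⟩ := RingQuot.mkAlgHom_surjective ℂ (FqRel N q) y
  induction f using FreeAlgebra.induction with
  | grade0 r => simp [AlgHom.commutes, Algebra.commutes]
  | grade1 g =>
      rcases g with j | j
      · exact hz j
      · exact hs j
  | mul a b ha hb => rw [map_mul, mul_assoc, hb, ← mul_assoc, ha, mul_assoc]
  | add a b ha hb => rw [map_add, add_mul, ha, hb, mul_add]

lemma z_Sq (i : Fin N) :
    zGen N q i * Sq N q i = (q⁻¹) ^ 2 • (Sq N q i * zGen N q i) := by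
  unfold Sq
  rw [Finset.mul_sum, Finset.sum_mul, Finset.smul_sum]
  refine Finset.sum_congr rfl fun k hk => ?_
  have hik : i < k := (Finset.mem_filter.mp hk).2
  have h1 := rel_zz N q hik
  have h2 := rel_zs N q (ne_of_lt hik)
  calc zGen N q i * (zGen N q k * zsGen N q k)
      = (zGen N q i * zGen N q k) * zsGen N q k := by rw [mul_assoc]
    _ = q⁻¹ • (zGen N q k * (zGen N q i * zsGen N q k)) := by
        rw [h1, smul_mul_assoc, mul_assoc]
    _ = q⁻¹ • (zGen N q k * (q⁻¹ • (zsGen N q k * zGen N q i))) := by rw [h2]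
    _ = (q⁻¹) ^ 2 • (zGen N q k * zsGen N q k * zGen N q i) := by
        rw [mul_smul_comm, smul_smul, ← pow_two, mul_assoc]

lemma Sq_zs (hq : q ≠ 0) (i : Fin N) :
    Sq N q i * zsGen N q i = (q⁻¹) ^ 2 • (zsGen N q i * Sq N q i) := by
  unfold Sq
  rw [Finset.sum_mul, Finset.mul_sum, Finset.smul_sum]
  refine Finset.sum_congr rfl fun k hk => ?_
  have hik : i < k := (Finset.mem_filter.mp hk).2
  have h1 : zsGen N q k * zsGen N q i = q⁻¹ • (zsGen N q i * zsGen N q k) :=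
    swap_smul hq (rel_ss N q hik)
  have h2 := rel_zs N q (ne_of_lt hik).symm.symm
  -- h2 : zGen k * zsGen i = q⁻¹ • (zsGen i * zGen k) needs k ≠ i
  have h2' : zGen N q k * zsGen N q i = q⁻¹ • (zsGen N q i * zGen N q k) :=
    rel_zs N q (ne_of_gt hik)
  calc zGen N q k * zsGen N q k * zsGen N q i
      = zGen N q k * (zsGen N q k * zsGen N q i) := by rw [mul_assoc]
    _ = q⁻¹ • ((zGen N q k * zsGen N q i) * zsGen N q k) := by
        rw [h1, mul_smul_comm, ← mul_assoc]
    _ = q⁻¹ • ((q⁻¹ • (zsGen N q i * zGen N q k)) * zsGen N q k) := by rw [h2']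
    _ = (q⁻¹) ^ 2 • (zsGen N q i * (zGen N q k * zsGen N q k)) := by
        rw [smul_mul_assoc, smul_smul, ← pow_two, mul_assoc]

/-- Scalar `e q n = (q² - 1)·(1 + q⁻² + … + q^{-2(n-1)})`. -/
noncomputable def e (n : ℕ) : ℂ := (q ^ 2 - 1) * ∑ t ∈ Finset.range n, ((q⁻¹) ^ 2) ^ t

lemma e_succ₁ (n : ℕ) : e q (n + 1) = (q ^ 2 - 1) + e q n * (q⁻¹) ^ 2 := by
  unfold e
  rw [geom_sum_succ]
  ring

lemma e_succ₂ (n : ℕ) : e q (n + 1) = e q n + (q ^ 2 - 1) * ((q⁻¹) ^ 2) ^ n := by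
  unfold e
  rw [geom_sum_succ']
  ring

lemma e_eq_zero {m : ℕ} (hq : q ≠ 0) (hqm : q ^ m = 1) : e q m = 0 := by
  unfold e
  by_cases h2 : q ^ 2 = 1
  · simp [h2]
  · have hx : (q⁻¹) ^ 2 ≠ 1 := by
      rw [inv_pow, Ne, inv_eq_one]
      exact h2
    have hxm : ((q⁻¹) ^ 2) ^ m = 1 := by
      rw [← pow_mul, mul_comm, pow_mul, inv_pow, hqm, inv_one, one_pow]
    rw [geom_sum_eq hx, hxm]
    simp

lemma zpow_zs (i : Fin N) (a : ℕ) :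
    zGen N q i ^ (a + 1) * zsGen N q i =
      zsGen N q i * zGen N q i ^ (a + 1) + e q (a + 1) • (Sq N q i * zGen N q i ^ a) := by
  induction a with
  | zero =>
      simp only [zero_add, pow_one, pow_zero, mul_one]
      rw [rel_heis, show e q 1 = q ^ 2 - 1 by simp [e]]
  | succ a ih =>
      have hz := rel_heis N q i
      have hS := z_Sq N q i
      calc zGen N q i ^ (a + 2) * zsGen N q i
          = zGen N q i * (zGen N q i ^ (a + 1) * zsGen N q i) := by
            rw [pow_succ', mul_assoc]
        _ = zGen N q i * (zsGen N q i * zGen N q i ^ (a + 1))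
              + e q (a + 1) • (zGen N q i * (Sq N q i * zGen N q i ^ a)) := by
            rw [ih, mul_add, mul_smul_comm]
        _ = (zGen N q i * zsGen N q i) * zGen N q i ^ (a + 1)
              + (e q (a + 1) * (q⁻¹) ^ 2) • (Sq N q i * zGen N q i ^ (a + 1)) := by
            rw [← mul_assoc, ← mul_assoc, hS, smul_mul_assoc, smul_smul,
              mul_assoc (FqAux.Sq N q i) (zGen N q i) (zGen N q i ^ a), ← pow_succ']
        _ = zsGen N q i * zGen N q i ^ (a + 2)
              + (q ^ 2 - 1) • (Sq N q i * zGen N q i ^ (a + 1))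
              + (e q (a + 1) * (q⁻¹) ^ 2) • (Sq N q i * zGen N q i ^ (a + 1)) := by
            rw [hz, add_mul, smul_mul_assoc, mul_assoc, ← pow_succ']
        _ = zsGen N q i * zGen N q i ^ (a + 2)
              + e q (a + 2) • (Sq N q i * zGen N q i ^ (a + 1)) := by
            rw [add_assoc, ← add_smul, ← e_succ₁]

lemma z_zspow (hq : q ≠ 0) (i : Fin N) (a : ℕ) :
    zGen N q i * zsGen N q i ^ (a + 1) =
      zsGen N q i ^ (a + 1) * zGen N q i + e q (a + 1) • (zsGen N q i ^ a * Sq N q i) := by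
  induction a with
  | zero =>
      simp only [zero_add, pow_one, pow_zero, one_mul]
      rw [rel_heis, show e q 1 = q ^ 2 - 1 by simp [e]]
  | succ a ih =>
      have hz := rel_heis N q i
      have hSW := Sq_zs N q hq i
      calc zGen N q i * zsGen N q i ^ (a + 2)
          = (zGen N q i * zsGen N q i) * zsGen N q i ^ (a + 1) := by
            rw [pow_succ', ← mul_assoc]
        _ = zsGen N q i * (zGen N q i * zsGen N q i ^ (a + 1))
              + (q ^ 2 - 1) • (Sq N q i * zsGen N q i ^ (a + 1)) := by
            rw [hz, add_mul, smul_mul_assoc, mul_assoc]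
        _ = zsGen N q i * (zsGen N q i ^ (a + 1) * zGen N q i
              + e q (a + 1) • (zsGen N q i ^ a * Sq N q i))
              + (q ^ 2 - 1) • (((q⁻¹) ^ 2) ^ (a + 1) • (zsGen N q i ^ (a + 1) * Sq N q i)) := by
            rw [ih, comm_pow hSW]
        _ = zsGen N q i ^ (a + 2) * zGen N q i
              + e q (a + 1) • (zsGen N q i ^ (a + 1) * Sq N q i)
              + ((q ^ 2 - 1) * ((q⁻¹) ^ 2) ^ (a + 1)) • (zsGen N q i ^ (a + 1) * Sq N q i) := by
            rw [mul_add, ← mul_assoc, ← pow_succ', mul_smul_comm, ← mul_assoc, ← pow_succ',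
              smul_smul]
        _ = zsGen N q i ^ (a + 2) * zGen N q i
              + e q (a + 2) • (zsGen N q i ^ (a + 1) * Sq N q i) := by
            rw [add_assoc, ← add_smul, ← e_succ₂]

end FqAux

/-- If `q^m = 1` then `z_i^m`, `(z_i^*)^m` are central, and `z_{N−1}^a (z_{N−1}^*)^{m−a}`
is central for `0 ≤ a ≤ m`. -/
theorem fq_powers_central (N : ℕ) (hN : 1 ≤ N) (m : ℕ) (hm : 1 ≤ m) (q : ℂ)
    (hq : q ≠ 0) (hqm : q ^ m = 1) :
    (∀ i : Fin N, zGen N q i ^ m ∈ Subring.center (Fq N q)) ∧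
    (∀ i : Fin N, zsGen N q i ^ m ∈ Subring.center (Fq N q)) ∧
    (∀ a : ℕ, a ≤ m →
      zGen N q ⟨N - 1, by omega⟩ ^ a * zsGen N q ⟨N - 1, by omega⟩ ^ (m - a) ∈
        Subring.center (Fq N q)) := by
  have hqinvm : (q⁻¹) ^ m = 1 := by rw [inv_pow, hqm, inv_one]
  obtain ⟨m', rfl⟩ : ∃ m', m = m' + 1 := ⟨m - 1, by omega⟩
  refine ⟨?_, ?_, ?_⟩
  · -- z_i^m central
    intro i
    apply FqAux.mem_center_of
    · intro j
      rcases lt_trichotomy j i with h | h | h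
      · rw [FqAux.comm_pow (FqAux.rel_zz N q h), hqinvm, one_smul]
      · subst h
        exact ((Commute.refl (zGen N q j)).pow_right _).eq
      · have hc : zGen N q j * zGen N q i = q • (zGen N q i * zGen N q j) := by
          have := FqAux.swap_smul (inv_ne_zero hq) (FqAux.rel_zz N q h)
          rwa [inv_inv] at this
        rw [FqAux.comm_pow hc, hqm, one_smul]
    · intro j
      by_cases hji : j = i
      · subst hji
        rw [FqAux.zpow_zs N q j m', FqAux.e_eq_zero q hq hqm, zero_smul, add_zero]
      · have hc : zsGen N q j * zGen N q i = q • (zGen N q i * zsGen N q j) := by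
          have := FqAux.swap_smul (inv_ne_zero hq) (FqAux.rel_zs N q (Ne.symm hji))
          rwa [inv_inv] at this
        rw [FqAux.comm_pow hc, hqm, one_smul]
  · -- (z_i^*)^m central
    intro i
    apply FqAux.mem_center_of
    · intro j
      by_cases hji : j = i
      · subst hji
        rw [FqAux.z_zspow N q hq j m', FqAux.e_eq_zero q hq hqm, zero_smul, add_zero]
      · rw [FqAux.comm_pow (FqAux.rel_zs N q hji), hqinvm, one_smul]
    · intro j
      rcases lt_trichotomy j i with h | h | h
      · rw [FqAux.comm_pow (FqAux.rel_ss N q h), hqm, one_smul]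
      · subst h
        exact ((Commute.refl (zsGen N q j)).pow_right _).eq
      · have hc : zsGen N q j * zsGen N q i = q⁻¹ • (zsGen N q i * zsGen N q j) :=
          FqAux.swap_smul hq (FqAux.rel_ss N q h)
        rw [FqAux.comm_pow hc, hqinvm, one_smul]
  · -- mixed powers at the top index
    intro a ha
    set t : Fin N := ⟨N - 1, by omega⟩ with ht
    have hS0 : FqAux.Sq N q t = 0 := by
      unfold FqAux.Sq
      rw [Finset.filter_eq_empty_iff.mpr, Finset.sum_empty]
      intro k _
      have hk := k.isLt
      simp only [ht, Fin.lt_def]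
      omega
    have hcomm : zGen N q t * zsGen N q t = zsGen N q t * zGen N q t := by
      rw [FqAux.rel_heis, hS0, smul_zero, add_zero]
    have hab : a + (m' + 1 - a) = m' + 1 := by omega
    apply FqAux.mem_center_of
    · intro j
      by_cases hj : j = t
      · rw [hj]
        exact (((Commute.refl (zGen N q t)).pow_right a).mul_right
          ((show Commute (zGen N q t) (zsGen N q t) from hcomm).pow_right _)).eq
      · have hjt : j < t := by
          have h1 := j.isLt
          have h2 : (j : ℕ) ≠ N - 1 := fun hh => hj (Fin.ext hh)
          have hval : (t : ℕ) = N - 1 := rfl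
          rw [Fin.lt_def, hval]
          omega
        have h1 := FqAux.rel_zz N q hjt
        have h2 := FqAux.rel_zs N q (ne_of_lt hjt)
        rw [FqAux.comm_mul_pow h1 h2, hab, hqinvm, one_smul]
    · intro j
      by_cases hj : j = t
      · rw [hj]
        exact (((show Commute (zsGen N q t) (zGen N q t) from hcomm.symm).pow_right a).mul_right
          ((Commute.refl (zsGen N q t)).pow_right _)).eq
      · have hjt : j < t := by
          have h1 := j.isLt
          have h2 : (j : ℕ) ≠ N - 1 := fun hh => hj (Fin.ext hh)
          have hval : (t : ℕ) = N - 1 := rfl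
          rw [Fin.lt_def, hval]
          omega
        have h1 : zsGen N q j * zGen N q t = q • (zGen N q t * zsGen N q j) := by
          have := FqAux.swap_smul (inv_ne_zero hq) (FqAux.rel_zs N q (ne_of_gt hjt))
          rwa [inv_inv] at this
        have h2 := FqAux.rel_ss N q hjt
        rw [FqAux.comm_mul_pow h1 h2, hab, hqm, one_smul]
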